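/- For each non-crossing perfect matching G of {1,...,2n}, let t_G = Σ_{g} (−1)^{inv(g)} b_g ∈ V^{⊗2n}, where the sum is over the 2^n orientations g of G, b_g is the basis tensor placing x at the tail and y at the head of each arrow, and inv(g) is the number of arrows directed right-to-left. Then the family {t_G}, as G ranges over all non-crossing perfect matchings of {1,...,2n}, is linearly independent in V^{⊗2n}. -/

import Mathlib

open Classical Finset PiTensorProduct
open scoped TensorProduct

/-- Non-crossing perfect matchings of Fin (2n), encoded as fixed-point-free
involutions with no crossing pattern a < b < p a < p b. -/
def NCMatching (n : ℕ) : Type :=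
  {p : Fin (2 * n) → Fin (2 * n) //
    Function.Involutive p ∧ (∀ i, p i ≠ i) ∧
    ∀ a b, ¬(a < b ∧ b < p a ∧ p a < p b)}

noncomputable instance (n : ℕ) : Fintype (NCMatching n) := by
  unfold NCMatching; infer_instance

/-- t_G = Σ_g (−1)^{inv g} b_g ∈ V^{⊗2n}, the sum being over the 2^n
orientations of the matching G.  An orientation is encoded by the set of heads
o : Fin (2n) → Bool (exactly one end of each edge is a head); the basis tensor
b_g puts x = (1,0) at each tail and y = (0,1) at each head, and inv g counts
the edges directed right-to-left, i.e. heads i with i < p i. -/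
noncomputable def tMatch {f : Type*} [Field f] (n : ℕ) (G : NCMatching n) :
    ⨂[f] (_ : Fin (2 * n)), (Fin 2 → f) :=
  ∑ o : {o : Fin (2 * n) → Bool // ∀ i, o (G.1 i) = !(o i)},
    ((-1 : ℤ) ^ (Finset.univ.filter fun i => o.1 i = true ∧ i < G.1 i).card) •
      PiTensorProduct.tprod f (fun i => if o.1 i then ![0, 1] else ![1, 0])


section AuxComb
open Finset

section Comb
variable {m : ℕ} {p : Fin m → Fin m}

/-- interval lemma: edges starting inside (a, p a) end inside. -/
lemma nc_interval (hinv : Function.Involutive p)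
    (hnc : ∀ a b, ¬(a < b ∧ b < p a ∧ p a < p b))
    (a b : Fin m) (h1 : a < b) (h2 : b < p a) :
    a < p b ∧ p b < p a := by
  have hba : p b ≠ a := fun h => absurd (show b = p a by rw [← h, hinv b]) h2.ne
  have hpp : p b ≠ p a := fun h => absurd (hinv.injective h) h1.ne'
  rcases lt_trichotomy (p b) a with h | h | h
  · exact absurd ⟨h, by rw [hinv b]; exact h1, by rw [hinv b]; exact h2⟩ (hnc (p b) a)
  · exact absurd h hba
  · refine ⟨h, ?_⟩
    rcases lt_trichotomy (p b) (p a) with h' | h' | h'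
    · exact h'
    · exact absurd h' hpp
    · exact absurd ⟨h1, h2, h'⟩ (hnc a b)

/-- On [a, p a], openers and closers are equinumerous. -/
lemma nc_card_eq (hinv : Function.Involutive p)
    (hnc : ∀ a b, ¬(a < b ∧ b < p a ∧ p a < p b))
    (a : Fin m) (ha : a < p a) :
    ((Icc a (p a)).filter (fun j => j < p j)).card
      = ((Icc a (p a)).filter (fun j => p j < j)).card := by
  refine Finset.card_bij (fun j _ => p j) ?_ ?_ ?_
  · intro j hj
    simp only [mem_filter, mem_Icc] at hj ⊢
    obtain ⟨⟨hj1, hj2⟩, hj3⟩ := hj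
    rcases eq_or_lt_of_le hj1 with rfl | hj1
    · exact ⟨⟨le_of_lt ha, le_refl _⟩, by rw [hinv]; exact ha⟩
    · have hj2' : j < p a := lt_of_le_of_ne hj2 (fun h => by
        rw [h, hinv a] at hj3; exact absurd ha (not_lt.mpr hj3.le))
      have := nc_interval hinv hnc a j hj1 hj2'
      exact ⟨⟨this.1.le, this.2.le⟩, by rw [hinv]; exact hj3⟩
  · intro j₁ h₁ j₂ h₂ h; exact hinv.injective h
  · intro d hd
    simp only [mem_filter, mem_Icc] at hd
    obtain ⟨⟨hd1, hd2⟩, hd3⟩ := hd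
    refine ⟨p d, ?_, hinv d⟩
    simp only [mem_filter, mem_Icc, hinv d]
    rcases eq_or_lt_of_le hd2 with h | hd2
    · rw [h, hinv a]
      exact ⟨⟨le_refl _, ha.le⟩, h ▸ ha⟩
    · have hd1' : a < d := lt_of_le_of_ne hd1 (fun h => by
        rw [← h] at hd3; exact absurd hd3 (not_lt.mpr ha.le))
      have := nc_interval hinv hnc a d hd1' hd2
      exact ⟨⟨this.1.le, this.2.le⟩, hd3⟩

/-- On [a, b] with b < p a, strictly more openers than closers. -/
lemma nc_card_lt (hinv : Function.Involutive p)
    (hnc : ∀ a b, ¬(a < b ∧ b < p a ∧ p a < p b))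
    (a b : Fin m) (ha : a < p a) (hab : a ≤ b) (hb : b < p a) :
    ((Icc a b).filter (fun j => p j < j)).card
      < ((Icc a b).filter (fun j => j < p j)).card := by
  have key : ((Icc a b).filter (fun j => p j < j)).card
      ≤ (((Icc a b).filter (fun j => j < p j)).erase a).card := by
    refine Finset.card_le_card_of_injOn p ?_ ?_
    · intro d hd
      simp only [Finset.mem_coe, mem_filter, mem_Icc] at hd
      obtain ⟨⟨hd1, hd2⟩, hd3⟩ := hd
      have hd1' : a < d := lt_of_le_of_ne hd1 (fun h => by
        rw [← h] at hd3; exact absurd hd3 (not_lt.mpr ha.le))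
      have h2 := nc_interval hinv hnc a d hd1' (lt_of_le_of_lt hd2 hb)
      simp only [Finset.mem_coe, mem_erase, mem_filter, mem_Icc]
      exact ⟨h2.1.ne', ⟨h2.1.le, (hd3.le.trans hd2)⟩, by rw [hinv]; exact hd3⟩
    · exact fun x _ y _ h => hinv.injective h
  have hmem : a ∈ (Icc a b).filter (fun j => j < p j) := by
    simp only [mem_filter, mem_Icc]; exact ⟨⟨le_refl _, hab⟩, ha⟩
  calc ((Icc a b).filter (fun j => p j < j)).card
      ≤ _ := key
    _ < _ := Finset.card_erase_lt_of_mem hmem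

end Comb

section Inj
variable {m : ℕ} {p q : Fin m → Fin m}

lemma nc_filter_congr (hW : ∀ j, p j < j ↔ q j < j) (s : Finset (Fin m)) :
    s.filter (fun j => p j < j) = s.filter (fun j => q j < j) :=
  Finset.filter_congr (fun j _ => by rw [hW j])

lemma nc_filter_congr' (hfixp : ∀ i, p i ≠ i) (hfixq : ∀ i, q i ≠ i)
    (hW : ∀ j, p j < j ↔ q j < j) (s : Finset (Fin m)) :
    s.filter (fun j => j < p j) = s.filter (fun j => j < q j) := by
  refine Finset.filter_congr (fun j _ => ?_)
  have hp := (hfixp j).lt_or_gt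
  have hq := (hfixq j).lt_or_gt
  constructor
  · intro h
    rcases hq with h' | h'
    · exact absurd ((hW j).mpr h') (not_lt.mpr h.le)
    · exact h'
  · intro h
    rcases hp with h' | h'
    · exact absurd ((hW j).mp h') (not_lt.mpr h.le)
    · exact h'

lemma nc_step (hinvp : Function.Involutive p)
    (hncp : ∀ a b, ¬(a < b ∧ b < p a ∧ p a < p b))
    (hinvq : Function.Involutive q)
    (hncq : ∀ a b, ¬(a < b ∧ b < q a ∧ q a < q b))
    (hfixp : ∀ i, p i ≠ i) (hfixq : ∀ i, q i ≠ i)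
    (hW : ∀ j, p j < j ↔ q j < j)
    (a : Fin m) (ha : a < p a) (haq : a < q a) : p a = q a := by
  by_contra hne
  rcases lt_or_gt_of_ne hne with hlt | hlt
  · -- p a < q a : balance at p a for p, strict for q on [a, p a]
    have h1 := nc_card_eq hinvp hncp a ha
    have h2 := nc_card_lt hinvq hncq a (p a) haq ha.le hlt
    rw [← nc_filter_congr hW, ← nc_filter_congr' hfixp hfixq hW] at h2
    omega
  · have h1 := nc_card_eq hinvq hncq a haq
    have h2 := nc_card_lt hinvp hncp a (q a) ha haq.le hlt
    rw [nc_filter_congr hW, nc_filter_congr' hfixp hfixq hW] at h2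
    omega

lemma nc_word_injective (hinvp : Function.Involutive p)
    (hncp : ∀ a b, ¬(a < b ∧ b < p a ∧ p a < p b))
    (hinvq : Function.Involutive q)
    (hncq : ∀ a b, ¬(a < b ∧ b < q a ∧ q a < q b))
    (hfixp : ∀ i, p i ≠ i) (hfixq : ∀ i, q i ≠ i)
    (hW : ∀ j, p j < j ↔ q j < j) : p = q := by
  have step : ∀ a, a < p a → p a = q a := by
    intro a ha
    have haq : a < q a := by
      rcases (hfixq a).lt_or_gt with h | h
      · exact absurd ((hW a).mpr h) (not_lt.mpr ha.le)
      · exact h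
    exact nc_step hinvp hncp hinvq hncq hfixp hfixq hW a ha haq
  funext a
  rcases (hfixp a).lt_or_gt with h | h
  · -- p a < a : a is a closer; apply step to p a
    have h1 : p a < p (p a) := by rw [hinvp a]; exact h
    have h2 := step (p a) h1
    rw [hinvp a] at h2
    -- h2 : a = q (p a)
    have := congrArg q h2
    rw [hinvq] at this
    exact this.symm ▸ rfl
  · exact step a h

noncomputable def keyW {m : ℕ} (x : Fin m → Bool) : ℕ :=
  ∑ j : Fin m, if x j then 2 ^ (m - 1 - (j : ℕ)) else 0

lemma sum_range_two_pow (k : ℕ) : ∑ j ∈ Finset.range k, 2 ^ j = 2 ^ k - 1 := by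
  induction k with
  | zero => simp
  | succ k ih =>
    rw [Finset.sum_range_succ, ih]
    have := Nat.one_le_two_pow (n := k); ring_nf; omega

lemma keyW_lt {m : ℕ} {x y : Fin m → Bool} (i : Fin m)
    (hpre : ∀ j, j < i → x j = y j) (hx : x i = false) (hy : y i = true) :
    keyW x < keyW y := by
  classical
  have hsplit : ∀ z : Fin m → Bool, keyW z
      = ∑ j ∈ Iio i, (if z j then 2 ^ (m - 1 - (j : ℕ)) else 0)
        + ∑ j ∈ Ici i, (if z j then 2 ^ (m - 1 - (j : ℕ)) else 0) := by
    intro z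
    rw [keyW, ← Finset.sum_union (by simp [Finset.disjoint_left])]
    congr 1
    ext j
    simp [lt_or_ge j i]
  rw [hsplit x, hsplit y]
  have hpre' : ∑ j ∈ Iio i, (if x j then 2 ^ (m - 1 - (j : ℕ)) else 0)
      = ∑ j ∈ Iio i, (if y j then 2 ^ (m - 1 - (j : ℕ)) else 0) :=
    Finset.sum_congr rfl (fun j hj => by rw [hpre j (mem_Iio.mp hj)])
  rw [hpre']
  have hIci : Ici i = insert i (Ioi i) := by
    ext j; simp [le_iff_lt_or_eq, eq_comm, or_comm]
  have him : i < m := i.2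
  have hbound : ∑ j ∈ Ioi i, (if x j then 2 ^ (m - 1 - (j : ℕ)) else 0)
      ≤ 2 ^ (m - 1 - (i : ℕ)) - 1 := by
    calc ∑ j ∈ Ioi i, (if x j then 2 ^ (m - 1 - (j : ℕ)) else 0)
        ≤ ∑ j ∈ Ioi i, 2 ^ (m - 1 - (j : ℕ)) := by
          refine Finset.sum_le_sum (fun j _ => ?_); split <;> simp
      _ = ∑ e ∈ (Ioi i).image (fun j : Fin m => m - 1 - (j : ℕ)), 2 ^ e := by
          rw [Finset.sum_image]
          intro a _ b _ hab
          have ha' : (a : ℕ) ≤ m - 1 := by omega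
          have hb' : (b : ℕ) ≤ m - 1 := by omega
          beta_reduce at hab
          have : (a : ℕ) = (b : ℕ) := by omega
          exact Fin.ext this
      _ ≤ ∑ e ∈ Finset.range (m - 1 - (i : ℕ)), 2 ^ e := by
          refine Finset.sum_le_sum_of_subset ?_
          intro e he
          simp only [Finset.mem_image, mem_Ioi] at he
          obtain ⟨j, hj, rfl⟩ := he
          have hij : (i : ℕ) < (j : ℕ) := hj
          have : (j : ℕ) < m := j.2
          simp only [Finset.mem_range]; omega
      _ = 2 ^ (m - 1 - (i : ℕ)) - 1 := sum_range_two_pow _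
  have hsx : ∑ j ∈ Ici i, (if x j then 2 ^ (m - 1 - (j : ℕ)) else 0)
      ≤ 2 ^ (m - 1 - (i : ℕ)) - 1 := by
    rw [hIci, Finset.sum_insert (by simp), hx]
    simpa using hbound
  have hsy : 2 ^ (m - 1 - (i : ℕ))
      ≤ ∑ j ∈ Ici i, (if y j then 2 ^ (m - 1 - (j : ℕ)) else 0) := by
    rw [hIci, Finset.sum_insert (by simp), hy]
    simp
  have hpos : 0 < 2 ^ (m - 1 - (i : ℕ)) := Nat.pow_pos (by norm_num)
  omega

section Orient
variable {m : ℕ} {p : Fin m → Fin m}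

/-- The canonical left-to-right word of a matching. -/
def wordOf (p : Fin m → Fin m) : Fin m → Bool := fun i => decide (p i < i)

lemma wordOf_orient (hinv : Function.Involutive p) (hfix : ∀ i, p i ≠ i) :
    ∀ i, wordOf p (p i) = !(wordOf p i) := by
  intro i
  simp only [wordOf, hinv i]
  rcases (hfix i).lt_or_gt with h | h
  · simp [h, h.le, not_lt.mpr h.le]
  · simp [h, not_lt.mpr h.le]

lemma orient_word_min (hinv : Function.Involutive p) (hfix : ∀ i, p i ≠ i)
    {o : Fin m → Bool} (ho : ∀ i, o (p i) = !(o i)) (hne : o ≠ wordOf p) :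
    keyW (wordOf p) < keyW o := by
  classical
  have hs : (univ.filter (fun j => o j ≠ wordOf p j)).Nonempty := by
    rw [Finset.filter_nonempty_iff]
    obtain ⟨j, hj⟩ := Function.ne_iff.mp hne
    exact ⟨j, mem_univ j, hj⟩
  set i := (univ.filter (fun j => o j ≠ wordOf p j)).min' hs with hi
  have hmemi : o i ≠ wordOf p i := by
    have := (univ.filter (fun j => o j ≠ wordOf p j)).min'_mem hs
    rw [← hi] at this
    exact (mem_filter.mp this).2
  have hpre : ∀ j, j < i → o j = wordOf p j := by
    intro j hj
    by_contra hcon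
    have : i ≤ j := Finset.min'_le (univ.filter (fun j => o j ≠ wordOf p j)) j (mem_filter.mpr ⟨mem_univ _, hcon⟩)
    exact absurd hj (not_lt.mpr this)
  have hwi : wordOf p i = false := by
    by_contra hcon
    have hwi' : wordOf p i = true := by revert hcon; cases wordOf p i <;> simp
    have hpi : p i < i := by simpa [wordOf] using hwi'
    have hdiff : o (p i) ≠ wordOf p (p i) := by
      rw [ho i, wordOf_orient hinv hfix i]
      intro h
      exact hmemi (by cases h' : o i <;> cases h'' : wordOf p i <;>
        simp_all)
    have : i ≤ p i := Finset.min'_le (univ.filter (fun j => o j ≠ wordOf p j)) (p i) (mem_filter.mpr ⟨mem_univ _, hdiff⟩)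
    exact absurd hpi (not_lt.mpr this)
  have hoi : o i = true := by
    cases h : o i
    · exact absurd (h.trans hwi.symm) hmemi
    · rfl
  exact keyW_lt i (fun j hj => (hpre j hj).symm) hwi hoi

end Orient

end Inj
end AuxComb

section Alg
open Classical Finset PiTensorProduct
open scoped TensorProduct

variable {f : Type*} [Field f] {m : ℕ}

/-- coordinate functional b_w^* on the tensor power. -/
noncomputable def phiW (w : Fin m → Bool) :
    (⨂[f] (_ : Fin m), (Fin 2 → f)) →ₗ[f] f :=
  PiTensorProduct.lift ((MultilinearMap.mkPiAlgebra f (Fin m) f).compLinearMap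
    (fun i => LinearMap.proj (if w i then (1 : Fin 2) else 0)))

lemma phiW_tprod (w : Fin m → Bool) (v : Fin m → (Fin 2 → f)) :
    phiW w (PiTensorProduct.tprod f v) = ∏ i, v i (if w i then 1 else 0) := by
  simp [phiW]

lemma phiW_basis (w o : Fin m → Bool) :
    phiW (f := f) w (PiTensorProduct.tprod f (fun i => if o i then ![0,1] else ![1,0]))
      = if o = w then 1 else 0 := by
  rw [phiW_tprod]
  by_cases h : o = w
  · subst h; rw [if_pos rfl]
    apply Finset.prod_eq_one; intro i _; cases hi : o i <;> simp [hi]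
  · rw [if_neg h]
    obtain ⟨i, hi⟩ := Function.ne_iff.mp h
    refine Finset.prod_eq_zero (mem_univ i) ?_
    cases h1 : o i <;> cases h2 : w i <;> simp_all

end Alg

section Main
open Classical Finset PiTensorProduct
open scoped TensorProduct

variable {f : Type*} [Field f] {n : ℕ}

lemma phiW_tMatch_self (G : NCMatching n) :
    phiW (f := f) (wordOf G.1) (tMatch (f := f) n G) ≠ 0 := by
  obtain ⟨p, hinv, hfix, hnc⟩ := G
  set w := wordOf p with hw
  have hor : ∀ i, w (p i) = !(w i) := wordOf_orient hinv hfix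
  unfold tMatch; rw [map_sum]
  have : ∀ o : {o : Fin (2 * n) → Bool // ∀ i, o (p i) = !(o i)},
      phiW (f := f) w
        (((-1 : ℤ) ^ (Finset.univ.filter fun i => o.1 i = true ∧ i < p i).card) •
          PiTensorProduct.tprod f (fun i => if o.1 i then ![0, 1] else ![1, 0]))
      = ((-1 : ℤ) ^ (Finset.univ.filter fun i => o.1 i = true ∧ i < p i).card) •
          (if o.1 = w then (1 : f) else 0) := by
    intro o; rw [map_zsmul, phiW_basis]
  simp only [this]
  rw [Finset.sum_eq_single (⟨w, hor⟩ : {o : Fin (2 * n) → Bool // ∀ i, o (p i) = !(o i)})]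
  · simp only [if_pos rfl, zsmul_eq_mul, mul_one]
    push_cast
    rw [mul_one]
    exact pow_ne_zero _ (by norm_num)
  · intro o _ ho
    have : o.1 ≠ w := fun h => ho (Subtype.ext h)
    rw [if_neg this, smul_zero]
  · intro h; exact absurd (mem_univ _) h

lemma phiW_tMatch_notOrient (G : NCMatching n) (w : Fin (2 * n) → Bool)
    (hw : ¬ ∀ i, w (G.1 i) = !(w i)) :
    phiW (f := f) w (tMatch (f := f) n G) = 0 := by
  rw [tMatch, map_sum]
  refine Finset.sum_eq_zero (fun o _ => ?_)
  rw [map_zsmul, phiW_basis, if_neg, smul_zero]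
  intro h
  exact hw (h ▸ o.2)

theorem stmt7_aux (f : Type*) [Field f] [CharZero f] (n : ℕ) :
    LinearIndependent f (tMatch (f := f) n) := by
  rw [Fintype.linearIndependent_iff]
  intro g hg
  by_contra hcon
  push_neg at hcon
  obtain ⟨G₀, hG₀⟩ := hcon
  set s : Finset (NCMatching n) := univ.filter (fun G => g G ≠ 0) with hs
  have hsne : s.Nonempty := ⟨G₀, by simp [hs, hG₀]⟩
  set T : Finset ℕ := s.image (fun G => keyW (wordOf G.1)) with hT
  have hTne : T.Nonempty := hsne.image _
  obtain ⟨G, hGs, hGmin⟩ := Finset.mem_image.mp (T.min'_mem hTne)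
  have hgG : g G ≠ 0 := (Finset.mem_filter.mp hGs).2
  have h0 : phiW (f := f) (wordOf G.1) (∑ G', g G' • tMatch (f := f) n G') = 0 := by
    rw [hg, map_zero]
  rw [map_sum] at h0
  simp only [map_smul] at h0
  rw [Finset.sum_eq_single G] at h0
  · exact hgG (by
      rcases smul_eq_zero.mp h0 with h | h
      · exact h
      · exact absurd h (phiW_tMatch_self G))
  · intro G' _ hne
    by_cases hg' : g G' = 0
    · rw [hg', zero_smul]
    · by_cases hor : ∀ i, wordOf G.1 (G'.1 i) = !(wordOf G.1 i)
      · exfalso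
        obtain ⟨p, hinvp, hfixp, hncp⟩ := G
        obtain ⟨q, hinvq, hfixq, hncq⟩ := G'
        by_cases heq : wordOf p = wordOf q
        · -- words equal forces matchings equal
          have hW : ∀ j, q j < j ↔ p j < j := by
            intro j
            have := congrFun heq j
            simp only [wordOf] at this
            constructor
            · intro h; by_contra h'; simp [h, h'] at this
            · intro h; by_contra h'; simp [h, h'] at this
          have := nc_word_injective hinvq hncq hinvp hncp hfixq hfixp hW
          exact hne (Subtype.ext this)
        · -- wordOf p is an orientation of q distinct from wordOf q
          have hlt : keyW (wordOf q) < keyW (wordOf p) :=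
            orient_word_min hinvq hfixq hor heq
          have hmem : keyW (wordOf q) ∈ T :=
            Finset.mem_image.mpr ⟨⟨q, hinvq, hfixq, hncq⟩, by
              exact Finset.mem_filter.mpr ⟨mem_univ _, hg'⟩, rfl⟩
          have hle := Finset.min'_le T _ hmem
          have h5 : keyW (wordOf p) = T.min' hTne := hGmin
          omega
      · rw [phiW_tMatch_notOrient G' _ hor, smul_zero]
  · intro h; exact absurd (mem_univ _) h
end Main


/-- the family {t_G}, G ranging over non-crossing perfect
matchings of {1,...,2n}, is linearly independent in V^{⊗2n}. -/
theorem stmt7 (f : Type*) [Field f] [CharZero f] (n : ℕ) :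
    LinearIndependent f (tMatch (f := f) n) := stmt7_aux f n
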